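/- Fix nonnegative integers r and k. Let S_{k,r}(n) denote the number of partitions of the set [r+n] = {1,…,r+n} into exactly k+r blocks such that the elements 1,…,r lie in distinct blocks, and let B_r(n) = Σ_k S_{k,r}(n) denote the number of partitions of [r+n] such that 1,…,r lie in distinct blocks. Then both sequences n ↦ S_{k,r}(n) (the restricted Stirling numbers of the second kind) and n ↦ B_r(n) (the restricted Bell numbers) are MC-finite. -/

import Mathlib

/-- A sequence is MC-finite iff for every m ≥ 2 it is ultimately periodic modulo m. -/
def MCFinite (s : ℕ → ℕ) : Prop :=
  ∀ m : ℕ, 2 ≤ m → ∃ r p : ℕ, 1 ≤ p ∧ ∀ n : ℕ, r ≤ n → s (n + p) ≡ s n [MOD m]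

/-- The restricted Stirling number of the second kind S_{k,r}(n): the number of
partitions of [r+n] into exactly k+r blocks such that the first r elements lie in
distinct blocks. -/
noncomputable def restrictedStirling (r k n : ℕ) : ℕ :=
  Nat.card { P : Finpartition (Finset.univ : Finset (Fin (r + n))) //
    P.parts.card = k + r ∧
    ∀ b ∈ P.parts, (b.filter fun x : Fin (r + n) => (x : ℕ) < r).card ≤ 1 }

/-- The restricted Bell number B_r(n): the number of partitions of [r+n] such that the
first r elements lie in distinct blocks (equivalently, Σ_k S_{k,r}(n)). -/
noncomputable def restrictedBell (r n : ℕ) : ℕ :=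
  Nat.card { P : Finpartition (Finset.univ : Finset (Fin (r + n))) //
    ∀ b ∈ P.parts, (b.filter fun x : Fin (r + n) => (x : ℕ) < r).card ≤ 1 }

open Finset

/-- Encoding of a set partition of `Fin N` as the "min of block" function, together with the
condition that the first `r` elements lie in distinct blocks. -/
def GoodPred (N r : ℕ) (f : Fin N → Fin N) : Prop :=
  (∀ x, f (f x) = f x) ∧ (∀ x, f x ≤ x) ∧
    ∀ x y : Fin N, (x : ℕ) < r → (y : ℕ) < r → f x = f y → x = y

instance (N r : ℕ) : DecidablePred (GoodPred N r) := fun _ => by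
  unfold GoodPred; infer_instance

/-- Number of fixed points of a function. -/
def fixc {N : ℕ} (f : Fin N → Fin N) : ℕ := #(univ.filter fun x => f x = x)

/-- The subtype of good functions. -/
def GF (N r : ℕ) : Type := {f : Fin N → Fin N // GoodPred N r f}

noncomputable instance (N r : ℕ) : Fintype (GF N r) := by unfold GF; infer_instance

/-- The min-of-block function of a partition. -/
def pmin {N : ℕ} (P : Finpartition (univ : Finset (Fin N))) : Fin N → Fin N :=
  fun x => (P.part x).min' ⟨x, P.mem_part (mem_univ x)⟩

lemma pmin_mem_part {N : ℕ} (P : Finpartition (univ : Finset (Fin N))) (x : Fin N) :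
    pmin P x ∈ P.part x := Finset.min'_mem _ _

lemma part_pmin {N : ℕ} (P : Finpartition (univ : Finset (Fin N))) (x : Fin N) :
    P.part (pmin P x) = P.part x :=
  P.part_eq_of_mem (P.part_mem.2 (mem_univ x)) (pmin_mem_part P x)

lemma pmin_le {N : ℕ} (P : Finpartition (univ : Finset (Fin N))) (x : Fin N) :
    pmin P x ≤ x := Finset.min'_le _ _ (P.mem_part (mem_univ x))

lemma pmin_idem {N : ℕ} (P : Finpartition (univ : Finset (Fin N))) (x : Fin N) :
    pmin P (pmin P x) = pmin P x := by
  refine le_antisymm (Finset.min'_le _ _ ?_) (Finset.le_min' _ _ _ ?_)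
  · rw [part_pmin]; exact pmin_mem_part P x
  · intro y hy
    rw [part_pmin] at hy
    exact Finset.min'_le _ _ hy

lemma pmin_eq_iff_part_eq {N : ℕ} (P : Finpartition (univ : Finset (Fin N))) (x y : Fin N) :
    pmin P x = pmin P y ↔ P.part x = P.part y := by
  constructor
  · intro h
    rw [← part_pmin P x, h, part_pmin]
  · intro h
    unfold pmin
    congr 1

/-- The partition associated to an idempotent function: blocks are the fibers over
fixed points. -/
def ofFn {N : ℕ} (f : Fin N → Fin N) (hf : ∀ x, f (f x) = f x) :
    Finpartition (univ : Finset (Fin N)) where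
  parts := (univ.filter fun y => f y = y).image fun y => univ.filter fun x => f x = y
  supIndep := by
    rw [Finset.supIndep_iff_pairwiseDisjoint]
    intro b1 h1 b2 h2 hne
    simp only [mem_coe, mem_image] at h1 h2
    obtain ⟨y1, _, rfl⟩ := h1
    obtain ⟨y2, _, rfl⟩ := h2
    refine Finset.disjoint_left.2 ?_
    intro a ha1 ha2
    simp only [id_eq, mem_filter] at ha1 ha2
    exact hne (by rw [← ha1.2, ha2.2])
  sup_parts := by
    apply le_antisymm
    · exact Finset.sup_le fun b _ => le_top
    · intro x _
      rw [Finset.mem_sup]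
      refine ⟨univ.filter fun z => f z = f x, ?_, ?_⟩
      · exact mem_image_of_mem _ (mem_filter.2 ⟨mem_univ _, hf x⟩)
      · exact mem_filter.2 ⟨mem_univ _, rfl⟩
  bot_notMem := by
    simp only [bot_eq_empty, mem_image, mem_filter]
    rintro ⟨y, ⟨-, hy⟩, h⟩
    have : y ∈ univ.filter fun x => f x = y := mem_filter.2 ⟨mem_univ _, hy⟩
    rw [h] at this
    exact absurd this (notMem_empty _)

lemma ofFn_parts {N : ℕ} (f : Fin N → Fin N) (hf : ∀ x, f (f x) = f x) :
    (ofFn f hf).parts = (univ.filter fun y => f y = y).image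
      fun y => univ.filter fun x => f x = y := rfl

lemma pmin_ofFn {N : ℕ} (f : Fin N → Fin N) (hf : ∀ x, f (f x) = f x)
    (hle : ∀ x, f x ≤ x) : pmin (ofFn f hf) = f := by
  funext x
  have hmem : (univ.filter fun z => f z = f x) ∈ (ofFn f hf).parts :=
    mem_image_of_mem _ (mem_filter.2 ⟨mem_univ _, hf x⟩)
  have hpart : (ofFn f hf).part x = univ.filter fun z => f z = f x :=
    (ofFn f hf).part_eq_of_mem hmem (mem_filter.2 ⟨mem_univ _, rfl⟩)
  apply le_antisymm
  · apply Finset.min'_le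
    rw [hpart]
    exact mem_filter.2 ⟨mem_univ _, hf x⟩
  · have h1 : pmin (ofFn f hf) x ∈ (ofFn f hf).part x := pmin_mem_part _ _
    rw [hpart, mem_filter] at h1
    calc f x = f (pmin (ofFn f hf) x) := h1.2.symm
    _ ≤ pmin (ofFn f hf) x := hle _

lemma fiber_pmin_eq_part {N : ℕ} (P : Finpartition (univ : Finset (Fin N))) (y : Fin N)
    (hy : pmin P y = y) : (univ.filter fun x => pmin P x = y) = P.part y := by
  ext x
  simp only [mem_filter, mem_univ, true_and]
  constructor
  · intro h
    have : P.part y = P.part x := by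
      rw [← part_pmin P x, h]
    rw [this]
    exact P.mem_part (mem_univ x)
  · intro h
    have hpp : P.part x = P.part y :=
      (P.mem_part_iff_part_eq_part (mem_univ x) (mem_univ y)).1 h
    rw [← hy]
    exact (pmin_eq_iff_part_eq P x y).2 hpp

lemma pmin_min' {N : ℕ} (P : Finpartition (univ : Finset (Fin N))) {b : Finset (Fin N)}
    (hb : b ∈ P.parts) (hne : b.Nonempty) : pmin P (b.min' hne) = b.min' hne := by
  have hyb : b.min' hne ∈ b := Finset.min'_mem _ _
  have hpy : P.part (b.min' hne) = b := P.part_eq_of_mem hb hyb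
  apply le_antisymm (pmin_le _ _)
  apply Finset.min'_le
  have := pmin_mem_part P (b.min' hne)
  rwa [hpy] at this

lemma ofFn_pmin {N : ℕ} (P : Finpartition (univ : Finset (Fin N))) :
    ofFn (pmin P) (pmin_idem P) = P := by
  ext b
  rw [ofFn_parts, mem_image]
  constructor
  · rintro ⟨y, hy, rfl⟩
    rw [mem_filter] at hy
    rw [fiber_pmin_eq_part P y hy.2]
    exact P.part_mem.2 (mem_univ y)
  · intro hb
    have hne : b.Nonempty := P.nonempty_of_mem_parts hb
    refine ⟨b.min' hne, mem_filter.2 ⟨mem_univ _, pmin_min' P hb hne⟩, ?_⟩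
    rw [fiber_pmin_eq_part P _ (pmin_min' P hb hne)]
    exact P.part_eq_of_mem hb (Finset.min'_mem _ _)

lemma ofFn_card_parts {N : ℕ} (f : Fin N → Fin N) (hf : ∀ x, f (f x) = f x) :
    (ofFn f hf).parts.card = fixc f := by
  rw [ofFn_parts, Finset.card_image_of_injOn]
  · rfl
  · intro y1 h1 y2 h2 hEq
    simp only [mem_coe, mem_filter] at h1 h2
    simp only at hEq
    have : y1 ∈ univ.filter fun x => f x = y2 := by
      rw [← hEq]
      exact mem_filter.2 ⟨mem_univ _, h1.2⟩
    rw [mem_filter] at this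
    rw [← this.2, h1.2]

lemma cond_iff_inj {N r : ℕ} (P : Finpartition (univ : Finset (Fin N))) :
    (∀ b ∈ P.parts, #(b.filter fun x : Fin N => (x : ℕ) < r) ≤ 1) ↔
      ∀ x y : Fin N, (x : ℕ) < r → (y : ℕ) < r → pmin P x = pmin P y → x = y := by
  constructor
  · intro h x y hx hy hpq
    have hpp : P.part x = P.part y := (pmin_eq_iff_part_eq P x y).1 hpq
    have h1 : x ∈ (P.part y).filter fun z : Fin N => (z : ℕ) < r := by
      rw [← hpp]; exact mem_filter.2 ⟨P.mem_part (mem_univ x), hx⟩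
    have h2 : y ∈ (P.part y).filter fun z : Fin N => (z : ℕ) < r :=
      mem_filter.2 ⟨P.mem_part (mem_univ y), hy⟩
    exact Finset.card_le_one.1 (h _ (P.part_mem.2 (mem_univ y))) _ h1 _ h2
  · intro h b hb
    rw [Finset.card_le_one]
    intro x hx y hy
    rw [mem_filter] at hx hy
    apply h x y hx.2 hy.2
    rw [pmin_eq_iff_part_eq, P.part_eq_of_mem hb hx.1, P.part_eq_of_mem hb hy.1]

/-- The master equivalence between restricted partitions and good functions. -/
def partEquiv (N r : ℕ) :
    {P : Finpartition (univ : Finset (Fin N)) //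
        ∀ b ∈ P.parts, #(b.filter fun x : Fin N => (x : ℕ) < r) ≤ 1} ≃ GF N r where
  toFun P := ⟨pmin P.1, pmin_idem P.1, pmin_le P.1, (cond_iff_inj P.1).1 P.2⟩
  invFun f := ⟨ofFn f.1 f.2.1, by
    rw [cond_iff_inj, pmin_ofFn f.1 f.2.1 f.2.2.1]
    exact f.2.2.2⟩
  left_inv P := Subtype.ext (ofFn_pmin P.1)
  right_inv f := Subtype.ext (pmin_ofFn f.1 f.2.1 f.2.2.1)

lemma card_parts_eq_fixc {N r : ℕ}
    (P : {P : Finpartition (univ : Finset (Fin N)) //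
        ∀ b ∈ P.parts, #(b.filter fun x : Fin N => (x : ℕ) < r) ≤ 1}) :
    P.1.parts.card = fixc (partEquiv N r P).1 := by
  conv_lhs => rw [← ofFn_pmin P.1]
  exact ofFn_card_parts _ _

section Step

variable {N r : ℕ}

/-- Restriction of a good function on `Fin (N+1)` to `Fin N`. -/
def stepDown (f : GF (N + 1) r) : Fin N → Fin N := fun x =>
  ⟨(f.1 x.castSucc : ℕ), lt_of_le_of_lt (by simpa [Fin.le_def] using f.2.2.1 x.castSucc) x.isLt⟩

lemma castSucc_stepDown (f : GF (N + 1) r) (x : Fin N) :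
    Fin.castSucc (stepDown f x) = f.1 x.castSucc := by
  apply Fin.ext
  simp [stepDown]

lemma stepDown_good (f : GF (N + 1) r) : GoodPred N r (stepDown f) := by
  obtain ⟨h1, h2, h3⟩ := f.2
  refine ⟨?_, ?_, ?_⟩
  · intro x
    apply Fin.ext
    show ((f.1 ((stepDown f x).castSucc)) : ℕ) = ((f.1 x.castSucc) : ℕ)
    rw [castSucc_stepDown, h1]
  · intro x
    simpa [Fin.le_def, stepDown] using (by simpa [Fin.le_def] using f.2.2.1 x.castSucc)
  · intro x y hx hy hxy
    have : f.1 x.castSucc = f.1 y.castSucc := by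
      rw [← castSucc_stepDown, ← castSucc_stepDown, hxy]
    have hcs : x.castSucc = y.castSucc := h3 _ _ (by simpa using hx) (by simpa using hy) this
    exact Fin.castSucc_injective _ hcs

/-- The good function on `Fin N` obtained by restriction. -/
def gdown (f : GF (N + 1) r) : GF N r := ⟨stepDown f, stepDown_good f⟩

/-- Extension of a good function on `Fin N` to `Fin (N+1)`, sending the last element to `y`. -/
def upFn (g : Fin N → Fin N) (y : Fin (N + 1)) : Fin (N + 1) → Fin (N + 1) := fun z =>
  if h : (z : ℕ) < N then (g ⟨(z : ℕ), h⟩).castSucc else y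

lemma upFn_last (g : Fin N → Fin N) (y : Fin (N + 1)) : upFn g y (Fin.last N) = y := by
  simp [upFn]

lemma upFn_castSucc (g : Fin N → Fin N) (y : Fin (N + 1)) (x : Fin N) :
    upFn g y x.castSucc = (g x).castSucc := by
  have h : ((x.castSucc : Fin (N+1)) : ℕ) < N := by simpa using x.isLt
  have : (⟨((x.castSucc : Fin (N+1)) : ℕ), h⟩ : Fin N) = x := Fin.ext (by simp)
  rw [upFn, dif_pos h, this]

lemma eq_last_of_not_lt {z : Fin (N + 1)} (h : ¬ (z : ℕ) < N) : z = Fin.last N :=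
  Fin.ext (by have := z.isLt; simp only [Fin.val_last]; omega)

end Step

section Step2

variable {N r : ℕ}

/-- The target of a new last element: either a new block (`last`) or a fixed point. -/
def OkPt (g : Fin N → Fin N) (y : Fin (N + 1)) : Prop :=
  y = Fin.last N ∨ ∃ h : (y : ℕ) < N, g ⟨(y : ℕ), h⟩ = ⟨(y : ℕ), h⟩

instance (g : Fin N → Fin N) : DecidablePred (OkPt g) := fun _ => by
  unfold OkPt; infer_instance

lemma upFn_good (hr : r ≤ N) (g : Fin N → Fin N) (hg : GoodPred N r g)
    {y : Fin (N + 1)} (hy : OkPt g y) : GoodPred (N + 1) r (upFn g y) := by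
  obtain ⟨h1, h2, h3⟩ := hg
  refine ⟨?_, ?_, ?_⟩
  · intro z
    by_cases h : (z : ℕ) < N
    · have hzc : z = (⟨(z : ℕ), h⟩ : Fin N).castSucc := Fin.ext (by simp)
      rw [hzc, upFn_castSucc, upFn_castSucc, h1]
    · rw [eq_last_of_not_lt h, upFn_last]
      rcases hy with hy | ⟨hlt, hfix⟩
      · rw [hy, upFn_last]
      · have hyc : y = (⟨(y : ℕ), hlt⟩ : Fin N).castSucc := Fin.ext (by simp)
        rw [hyc, upFn_castSucc, hfix]
  · intro z
    by_cases h : (z : ℕ) < N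
    · have hzc : z = (⟨(z : ℕ), h⟩ : Fin N).castSucc := Fin.ext (by simp)
      rw [hzc, upFn_castSucc, Fin.le_def]
      simpa [Fin.le_def] using h2 ⟨(z : ℕ), h⟩
    · rw [eq_last_of_not_lt h, upFn_last, Fin.le_def]
      rcases hy with hy | ⟨hlt, _⟩
      · rw [hy]
      · simp only [Fin.val_last]; omega
  · intro z w hz hw hzw
    have hz' : (z : ℕ) < N := lt_of_lt_of_le hz hr
    have hw' : (w : ℕ) < N := lt_of_lt_of_le hw hr
    have hzc : z = (⟨(z : ℕ), hz'⟩ : Fin N).castSucc := Fin.ext (by simp)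
    have hwc : w = (⟨(w : ℕ), hw'⟩ : Fin N).castSucc := Fin.ext (by simp)
    rw [hzc, hwc, upFn_castSucc, upFn_castSucc] at hzw
    have h' := h3 _ _ (by simpa using hz) (by simpa using hw)
      (Fin.castSucc_injective _ hzw)
    rw [hzc, hwc, h']

/-- The step equivalence: good functions on `Fin (N+1)` correspond to a good function
on `Fin N` together with an admissible target for the last element. -/
def stepEquiv (hr : r ≤ N) : GF (N + 1) r ≃ {p : GF N r × Fin (N + 1) // OkPt p.1.1 p.2} where
  toFun f := ⟨(gdown f, f.1 (Fin.last N)), by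
    by_cases h : f.1 (Fin.last N) = Fin.last N
    · exact Or.inl h
    · right
      have hle : (f.1 (Fin.last N) : ℕ) ≤ N := by
        simpa [Fin.le_def] using f.2.2.1 (Fin.last N)
      have hlt : (f.1 (Fin.last N) : ℕ) < N := by
        rcases lt_or_eq_of_le hle with h' | h'
        · exact h'
        · exact absurd (Fin.ext (by simpa using h')) h
      refine ⟨hlt, ?_⟩
      apply Fin.ext
      show ((f.1 ((⟨(f.1 (Fin.last N) : ℕ), hlt⟩ : Fin N).castSucc)) : ℕ) = _
      have : (⟨(f.1 (Fin.last N) : ℕ), hlt⟩ : Fin N).castSucc = f.1 (Fin.last N) :=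
        Fin.ext (by simp)
      rw [this, f.2.1]⟩
  invFun p := ⟨upFn p.1.1.1 p.1.2, upFn_good hr p.1.1.1 p.1.1.2 p.2⟩
  left_inv f := by
    apply Subtype.ext
    funext z
    by_cases h : (z : ℕ) < N
    · show upFn (stepDown f) (f.1 (Fin.last N)) z = f.1 z
      have hz : z = (⟨(z : ℕ), h⟩ : Fin N).castSucc := Fin.ext (by simp)
      rw [hz, upFn_castSucc, castSucc_stepDown]
    · show upFn (stepDown f) (f.1 (Fin.last N)) z = f.1 z
      rw [eq_last_of_not_lt h, upFn_last]
  right_inv p := by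
    apply Subtype.ext
    apply Prod.ext
    · apply Subtype.ext
      funext x
      apply Fin.ext
      show ((upFn p.1.1.1 p.1.2 x.castSucc) : ℕ) = ((p.1.1.1 x : Fin N) : ℕ)
      rw [upFn_castSucc]
      simp
    · show upFn p.1.1.1 p.1.2 (Fin.last N) = p.1.2
      exact upFn_last _ _

lemma fixc_stepEquiv (hr : r ≤ N) (f : GF (N + 1) r) :
    fixc f.1 = fixc (stepDown f) + (if f.1 (Fin.last N) = Fin.last N then 1 else 0) := by
  unfold fixc
  rw [Finset.card_filter, Finset.card_filter, Fin.sum_univ_castSucc]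
  congr 1
  apply Finset.sum_congr rfl
  intro i _
  congr 1
  rw [eq_iff_iff]
  constructor
  · intro hfix
    apply Fin.castSucc_injective
    rw [castSucc_stepDown, hfix]
  · intro hfix
    rw [← castSucc_stepDown, hfix]

end Step2

/-- Splitting a subtype of a product as a sigma type. -/
def prodSubtypeSigma {α β : Type*} (R : α × β → Prop) :
    {q : α × β // R q} ≃ Σ a : α, {b : β // R (a, b)} where
  toFun q := ⟨q.1.1, q.1.2, q.2⟩
  invFun x := ⟨(x.1, x.2.1), x.2.2⟩
  left_inv q := rfl
  right_inv x := rfl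

section Master

variable {N r : ℕ}

lemma inner_count (g : Fin N → Fin N) (c : ℕ) (S : ℕ → Prop) [DecidablePred S]
    (hc : c = fixc g) :
    Fintype.card {y : Fin (N + 1) //
        OkPt g y ∧ S (c + if y = Fin.last N then 1 else 0)} =
      (if S (c + 1) then 1 else 0) + (if S c then fixc g else 0) := by
  rw [Fintype.card_subtype, Finset.card_filter, Fin.sum_univ_castSucc]
  have hlast : (OkPt g (Fin.last N) ∧
      S (c + if (Fin.last N : Fin (N + 1)) = Fin.last N then 1 else 0)) ↔ S (c + 1) := by
    simp [OkPt]
  have hcs : ∀ i : Fin N, ((OkPt g i.castSucc ∧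
      S (c + if (i.castSucc : Fin (N + 1)) = Fin.last N then 1 else 0)) ↔
        (g i = i ∧ S c)) := by
    intro i
    have h1 : (i.castSucc : Fin (N + 1)) ≠ Fin.last N := by
      intro h
      have := congrArg Fin.val h
      simp at this
      omega
    have h2 : ((i.castSucc : Fin (N + 1)) : ℕ) < N := by simpa using i.isLt
    have h3 : (⟨((i.castSucc : Fin (N + 1)) : ℕ), h2⟩ : Fin N) = i := Fin.ext (by simp)
    simp only [OkPt, h1, if_neg h1, add_zero, false_or]
    constructor
    · rintro ⟨⟨h4, h5⟩, h6⟩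
      rw [h3] at h5
      exact ⟨h5, h6⟩
    · rintro ⟨h4, h5⟩
      exact ⟨⟨h2, by rw [h3]; exact h4⟩, h5⟩
  rw [add_comm]
  have h1 : (if (OkPt g (Fin.last N) ∧
      S (c + if (Fin.last N : Fin (N + 1)) = Fin.last N then 1 else 0)) then 1 else 0)
        = if S (c + 1) then 1 else 0 := if_congr hlast rfl rfl
  have h2 : (∑ i : Fin N, if (OkPt g i.castSucc ∧
      S (c + if (i.castSucc : Fin (N + 1)) = Fin.last N then 1 else 0)) then 1 else 0)
        = if S c then fixc g else 0 := by
    calc (∑ i : Fin N, if (OkPt g i.castSucc ∧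
        S (c + if (i.castSucc : Fin (N + 1)) = Fin.last N then 1 else 0)) then 1 else 0)
        = ∑ i : Fin N, if (g i = i ∧ S c) then 1 else 0 :=
          Finset.sum_congr rfl fun i _ => if_congr (hcs i) rfl rfl
      _ = if S c then fixc g else 0 := by
          by_cases hS : S c
          · simp only [hS, and_true, if_true]
            rw [fixc, Finset.card_filter]
          · simp [hS]
  rw [h1, h2]

lemma master (hr : r ≤ N) (S : ℕ → Prop) [DecidablePred S] :
    Nat.card {f : GF (N + 1) r // S (fixc f.1)} =
      ∑ g : GF N r,
        ((if S (fixc g.1 + 1) then 1 else 0) + (if S (fixc g.1) then fixc g.1 else 0)) := by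
  have e1 : {f : GF (N + 1) r // S (fixc f.1)} ≃
      {p : {p : GF N r × Fin (N + 1) // OkPt p.1.1 p.2} //
        (fun q : GF N r × Fin (N + 1) =>
          S (fixc q.1.1 + if q.2 = Fin.last N then 1 else 0)) p.1} := by
    refine Equiv.subtypeEquiv (stepEquiv hr) fun f => ?_
    have := fixc_stepEquiv hr f
    constructor
    · intro h
      show S (fixc (stepDown f) + if f.1 (Fin.last N) = Fin.last N then 1 else 0)
      rwa [← this]
    · intro h
      have h' : S (fixc (stepDown f) + if f.1 (Fin.last N) = Fin.last N then 1 else 0) := h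
      rwa [this]
  have e2 := (Equiv.subtypeSubtypeEquivSubtypeInter
    (fun q : GF N r × Fin (N + 1) => OkPt q.1.1 q.2)
    (fun q : GF N r × Fin (N + 1) =>
      S (fixc q.1.1 + if q.2 = Fin.last N then 1 else 0)))
  have e3 := prodSubtypeSigma (fun q : GF N r × Fin (N + 1) =>
    OkPt q.1.1 q.2 ∧ S (fixc q.1.1 + if q.2 = Fin.last N then 1 else 0))
  rw [Nat.card_congr ((e1.trans e2).trans e3), Nat.card_eq_fintype_card,
    Fintype.card_sigma]
  exact Finset.sum_congr rfl fun g _ => inner_count g.1 (fixc g.1) S rfl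

end Master

section Counts

/-- Number of good functions on `Fin (r+n)` with exactly `i` fixed points. -/
noncomputable def Acard (r n i : ℕ) : ℕ := Nat.card {g : GF (r + n) r // fixc g.1 = i}

/-- Number of good functions on `Fin (r+n)` whose number of fixed points is `j` mod `m`. -/
noncomputable def Ccard (r n m : ℕ) (j : ZMod m) : ℕ :=
  Nat.card {g : GF (r + n) r // (fixc g.1 : ZMod m) = j}

lemma card_subtype_sum {α : Type*} [Fintype α] (P : α → Prop) [DecidablePred P] :
    Nat.card {a : α // P a} = ∑ a : α, if P a then 1 else 0 := by
  rw [Nat.card_eq_fintype_card, Fintype.card_subtype, Finset.card_filter]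

lemma Acard_succ_zero (r n : ℕ) : Acard r (n + 1) 0 = 0 := by
  have h := master (r := r) (Nat.le_add_right r n) (fun t => t = 0)
  have h2 : Acard r (n + 1) 0 =
      Nat.card {f : GF (r + n + 1) r // (fun t => t = 0) (fixc f.1)} := rfl
  rw [h2, h]
  apply Finset.sum_eq_zero
  intro g _
  rw [if_neg (Nat.succ_ne_zero _)]
  by_cases hB : fixc g.1 = 0
  · simp [hB]
  · simp [hB]

lemma Acard_succ (r n i : ℕ) :
    Acard r (n + 1) (i + 1) = (i + 1) * Acard r n (i + 1) + Acard r n i := by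
  have h := master (r := r) (Nat.le_add_right r n) (fun t => t = i + 1)
  have h2 : Acard r (n + 1) (i + 1) =
      Nat.card {f : GF (r + n + 1) r // (fun t => t = i + 1) (fixc f.1)} := rfl
  rw [h2, h]
  rw [Finset.sum_add_distrib]
  have hA : (∑ g : GF (r + n) r, if fixc g.1 + 1 = i + 1 then 1 else 0) = Acard r n i := by
    rw [Acard, card_subtype_sum]
    exact Finset.sum_congr rfl fun g _ => if_congr (by omega) rfl rfl
  have hB : (∑ g : GF (r + n) r, if fixc g.1 = i + 1 then fixc g.1 else 0) =
      (i + 1) * Acard r n (i + 1) := by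
    rw [Acard, card_subtype_sum, Finset.mul_sum]
    apply Finset.sum_congr rfl
    intro g _
    by_cases hg : fixc g.1 = i + 1
    · simp [hg]
    · simp [hg]
  rw [hA, hB, add_comm]

lemma Ccard_cast_sum (r n m : ℕ) (j : ZMod m) :
    ((Ccard r n m j : ℕ) : ZMod m) =
      ∑ g : GF (r + n) r, if (fixc g.1 : ZMod m) = j then (1 : ZMod m) else 0 := by
  rw [Ccard, card_subtype_sum, Nat.cast_sum]
  exact Finset.sum_congr rfl fun g _ => by split_ifs <;> simp

lemma Ccard_succ (r n m : ℕ) (j : ZMod m) :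
    ((Ccard r (n + 1) m j : ℕ) : ZMod m) =
      (Ccard r n m (j - 1) : ZMod m) + j * (Ccard r n m j : ZMod m) := by
  have h := master (r := r) (Nat.le_add_right r n) (fun t => ((t : ℕ) : ZMod m) = j)
  have h2 : Ccard r (n + 1) m j =
      Nat.card {f : GF (r + n + 1) r // (fun t => ((t : ℕ) : ZMod m) = j) (fixc f.1)} := rfl
  rw [h2, h, Nat.cast_sum]
  have key : ∀ g : GF (r + n) r,
      (((if ((fixc g.1 + 1 : ℕ) : ZMod m) = j then 1 else 0) +
        (if ((fixc g.1 : ℕ) : ZMod m) = j then fixc g.1 else 0) : ℕ) : ZMod m) =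
      (if (fixc g.1 : ZMod m) = j - 1 then (1 : ZMod m) else 0) +
        j * (if (fixc g.1 : ZMod m) = j then (1 : ZMod m) else 0) := by
    intro g
    rw [Nat.cast_add]
    congr 1
    · rw [Nat.cast_ite, Nat.cast_one, Nat.cast_zero]
      apply if_congr _ rfl rfl
      rw [Nat.cast_add, Nat.cast_one, ← eq_sub_iff_add_eq]
    · rw [Nat.cast_ite, Nat.cast_zero]
      by_cases hg : (fixc g.1 : ZMod m) = j
      · rw [if_pos hg, if_pos hg, hg, mul_one]
      · rw [if_neg hg, if_neg hg, mul_zero]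
  rw [Finset.sum_congr rfl fun g _ => key g, Finset.sum_add_distrib,
    ← Ccard_cast_sum, ← Finset.mul_sum, ← Ccard_cast_sum]

lemma stirling_eq_Acard (r k n : ℕ) : restrictedStirling r k n = Acard r n (k + r) := by
  rw [restrictedStirling, Acard]
  apply Nat.card_congr
  exact (Equiv.subtypeEquivRight fun P => and_comm).trans
    (((Equiv.subtypeSubtypeEquivSubtypeInter _ _).symm).trans
      (Equiv.subtypeEquiv (partEquiv (r + n) r) fun P => by rw [card_parts_eq_fixc P]))

lemma bell_eq_card (r n : ℕ) : restrictedBell r n = Nat.card (GF (r + n) r) := by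
  rw [restrictedBell]
  exact Nat.card_congr (partEquiv (r + n) r)

lemma bell_cast_sum (r n m : ℕ) [NeZero m] :
    ((restrictedBell r n : ℕ) : ZMod m) = ∑ j : ZMod m, ((Ccard r n m j : ℕ) : ZMod m) := by
  rw [bell_eq_card]
  have h : Nat.card (GF (r + n) r) = ∑ j : ZMod m, Ccard r n m j := by
    rw [Nat.card_eq_fintype_card,
      ← Fintype.card_congr (Equiv.sigmaFiberEquiv fun g : GF (r + n) r => (fixc g.1 : ZMod m)),
      Fintype.card_sigma]
    exact Finset.sum_congr rfl fun j _ => by rw [Ccard, Nat.card_eq_fintype_card]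
  rw [h, Nat.cast_sum]

end Counts

lemma orbit_periodic {Ω : Type*} [Finite Ω] (u : ℕ → Ω) (Φ : Ω → Ω)
    (hstep : ∀ n, u (n + 1) = Φ (u n)) :
    ∃ a p : ℕ, 1 ≤ p ∧ ∀ n, a ≤ n → u (n + p) = u n := by
  have key : ∀ i j : ℕ, i < j → u i = u j →
      ∃ a p, 1 ≤ p ∧ ∀ n, a ≤ n → u (n + p) = u n := by
    intro i j hij hu
    refine ⟨i, j - i, by omega, ?_⟩
    have claim : ∀ t, u (i + t + (j - i)) = u (i + t) := by
      intro t
      induction t with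
      | zero =>
        rw [show i + 0 + (j - i) = j by omega, show i + 0 = i by omega]
        exact hu.symm
      | succ t ih =>
        rw [show i + (t + 1) + (j - i) = (i + t + (j - i)) + 1 by omega, hstep, ih,
          ← hstep, show (i + t) + 1 = i + (t + 1) by omega]
    intro n hn
    have h := claim (n - i)
    rwa [show i + (n - i) = n by omega] at h
  obtain ⟨i, j, hne, hu⟩ := Finite.exists_ne_map_eq_of_infinite u
  rcases Ne.lt_or_gt hne with h | h
  · exact key i j h hu
  · exact key j i h hu.symm

noncomputable def uState (r m K : ℕ) : ℕ → (Fin (K + 1) → ZMod m) × (ZMod m → ZMod m) :=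
  fun n => (fun i => ((Acard r n (i : ℕ) : ℕ) : ZMod m),
    fun j => ((Ccard r n m j : ℕ) : ZMod m))

def phiState (m K : ℕ) :
    ((Fin (K + 1) → ZMod m) × (ZMod m → ZMod m)) →
      ((Fin (K + 1) → ZMod m) × (ZMod m → ZMod m)) := fun q =>
  (fun i => if h : (i : ℕ) = 0 then 0 else
      ((i : ℕ) : ZMod m) * q.1 i + q.1 ⟨(i : ℕ) - 1, by omega⟩,
    fun j => q.2 (j - 1) + j * q.2 j)

lemma main_key (r k m : ℕ) (hm : 2 ≤ m) :
    ∃ a p : ℕ, 1 ≤ p ∧ ∀ n, a ≤ n →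
      (restrictedStirling r k (n + p) ≡ restrictedStirling r k n [MOD m] ∧
        restrictedBell r (n + p) ≡ restrictedBell r n [MOD m]) := by
  haveI : NeZero m := ⟨by omega⟩
  set K := k + r with hK
  have hstep : ∀ n, uState r m K (n + 1) = phiState m K (uState r m K n) := by
    intro n
    apply Prod.ext
    · funext i
      show ((Acard r (n + 1) (i : ℕ) : ℕ) : ZMod m) = if h : (i : ℕ) = 0 then 0 else
        ((i : ℕ) : ZMod m) * ((Acard r n (i : ℕ) : ℕ) : ZMod m) +
          ((Acard r n ((i : ℕ) - 1) : ℕ) : ZMod m)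
      by_cases h0 : (i : ℕ) = 0
      · rw [dif_pos h0, h0, Acard_succ_zero, Nat.cast_zero]
      · obtain ⟨t, ht⟩ : ∃ t, (i : ℕ) = t + 1 := ⟨(i : ℕ) - 1, by omega⟩
        rw [dif_neg h0, ht, Acard_succ, show t + 1 - 1 = t by omega]
        push_cast
        ring
    · funext j
      exact Ccard_succ r n m j
  obtain ⟨a, p, hp, hper⟩ := orbit_periodic (uState r m K) (phiState m K) hstep
  refine ⟨a, p, hp, fun n hn => ?_⟩
  constructor
  · have h1 := congrFun (congrArg Prod.fst (hper n hn)) ⟨K, by omega⟩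
    have h1' : ((Acard r (n + p) K : ℕ) : ZMod m) = ((Acard r n K : ℕ) : ZMod m) := h1
    rw [stirling_eq_Acard, stirling_eq_Acard, ← hK]
    exact (ZMod.natCast_eq_natCast_iff _ _ _).mp h1'
  · have h2 := congrArg Prod.snd (hper n hn)
    apply (ZMod.natCast_eq_natCast_iff _ _ _).mp
    rw [bell_cast_sum r (n + p) m, bell_cast_sum r n m]
    exact Finset.sum_congr rfl fun j _ => congrFun h2 j

/-- **MC-finiteness of restricted Stirling and Bell numbers.**
For all fixed r and k, the sequences n ↦ S_{k,r}(n) and n ↦ B_r(n) are MC-finite. -/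
theorem restrictedStirling_and_restrictedBell_mcfinite (r k : ℕ) :
    MCFinite (restrictedStirling r k) ∧ MCFinite (restrictedBell r) := by
  constructor
  · intro m hm
    obtain ⟨a, p, hp, h⟩ := main_key r k m hm
    exact ⟨a, p, hp, fun n hn => (h n hn).1⟩
  · intro m hm
    obtain ⟨a, p, hp, h⟩ := main_key r k m hm
    exact ⟨a, p, hp, fun n hn => (h n hn).2⟩
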